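/- CUR/skeleton exactness: if A ∈ ℝ^{m×n} has rank r, and C consists of r columns of A and R consists of r rows of A such that the r×r intersection submatrix U₀ (entries of A at the chosen rows and columns) is invertible, then A = C U₀⁻¹ R. -/

import Mathlib

/-- CUR/skeleton exactness: if `A` has rank `r`, `C` consists of `r` columns of
`A`, `R` of `r` rows of `A`, and the `r × r` intersection submatrix `U₀` is
invertible, then `A = C U₀⁻¹ R`. -/
theorem cur_decomposition_exact (m n r : ℕ)
    (A : Matrix (Fin m) (Fin n) ℝ) (hrank : A.rank = r)
    (I : Fin r → Fin m) (J : Fin r → Fin n)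
    (hI : Function.Injective I) (hJ : Function.Injective J)
    (hU : IsUnit (A.submatrix I J)) :
    A = A.submatrix id J * (A.submatrix I J)⁻¹ * A.submatrix I id := by
  classical
  set C : Matrix (Fin m) (Fin r) ℝ := A.submatrix id J with hC
  set R : Matrix (Fin r) (Fin n) ℝ := A.submatrix I id with hR
  set U : Matrix (Fin r) (Fin r) ℝ := A.submatrix I J with hUdef
  -- C = A * P for a selection matrix P
  have hCP : C = A * (Matrix.of fun k j => if k = J j then (1:ℝ) else 0) := by
    ext i j
    simp [hC, Matrix.mul_apply, Matrix.submatrix_apply]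
  -- U = Q * C for a selection matrix Q
  have hUQ : U = (Matrix.of fun i k => if k = I i then (1:ℝ) else 0) * C := by
    ext i j
    simp [hUdef, hC, Matrix.mul_apply, Matrix.submatrix_apply]
  -- rank C = r
  have hrankU : U.rank = r := by
    rw [Matrix.rank_of_isUnit U hU, Fintype.card_fin]
  have hCle : C.rank ≤ r := by
    rw [hCP]; exact (Matrix.rank_mul_le_left _ _).trans hrank.le
  have hCge : r ≤ C.rank := by
    calc r = U.rank := hrankU.symm
      _ = ((Matrix.of fun i k => if k = I i then (1:ℝ) else 0) * C).rank := by
          rw [← hUQ]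
      _ ≤ C.rank := Matrix.rank_mul_le_right _ _
  have hrankC : C.rank = r := le_antisymm hCle hCge
  -- range of C ≤ range of A
  have hle : LinearMap.range C.mulVecLin ≤ LinearMap.range A.mulVecLin := by
    rw [hCP, Matrix.mulVecLin_mul]
    exact LinearMap.range_comp_le_range _ _
  have hrange : LinearMap.range C.mulVecLin = LinearMap.range A.mulVecLin := by
    apply Submodule.eq_of_le_of_finrank_le hle
    show Module.finrank ℝ (LinearMap.range A.mulVecLin)
        ≤ Module.finrank ℝ (LinearMap.range C.mulVecLin)
    change A.rank ≤ C.rank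
    rw [hrank, hrankC]
  -- each column of A is in the range of C
  have hcol : ∀ j : Fin n, ∃ x : Fin r → ℝ, C.mulVec x = fun i => A i j := by
    intro j
    have : (fun i => A i j) ∈ LinearMap.range A.mulVecLin := by
      refine ⟨Pi.single j 1, ?_⟩
      ext i
      simp [Matrix.mulVecLin_apply, Matrix.mulVec_single]
    rw [← hrange] at this
    exact this
  choose x hx using hcol
  set X : Matrix (Fin r) (Fin n) ℝ := fun k j => x j k with hXdef
  have hAX : A = C * X := by
    ext i j
    have := congrFun (hx j) i
    rw [Matrix.mul_apply]
    simpa [Matrix.mulVec, dotProduct, Matrix.mul_apply, hXdef] using this.symm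
  have hUX : U * X = R := by
    ext i j
    have := congrFun (congrFun (congrArg (fun M => Matrix.submatrix M I (id : Fin n → Fin n)) hAX) i) j
    simpa [Matrix.mul_apply, Matrix.submatrix_apply, hR, hUdef, hC] using this.symm
  have hdet : IsUnit U.det := (Matrix.isUnit_iff_isUnit_det U).mp hU
  have hXeq : X = U⁻¹ * R := by
    rw [← hUX, ← Matrix.mul_assoc, Matrix.nonsing_inv_mul U hdet, Matrix.one_mul]
  calc A = C * X := hAX
    _ = C * (U⁻¹ * R) := by rw [hXeq]
    _ = C * U⁻¹ * R := by rw [Matrix.mul_assoc]
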